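/- arXiv:1201.0891 — 4 statements merged into one kernel-verified Lean document; each statement's English description precedes it below -/
import Mathlib

section
/- For every positive semidefinite d×d matrix ρ with tr(ρ) ≤ 1, the reachable space of the nondeterministic quantum program starting in ρ equals the reachable space of its average: ⋁{supp(T_f(ρ)) : f a word over {1,…,m}} = ⋁_{n≥0} supp(T^n(ρ)), where T = (1/m)·∑_{i=1}^m T_i is the average super-operator. -/
noncomputable section
open Matrix
open scoped ComplexOrder

variable {d m r : ℕ}

/-- One step of process `i`: `T_i(ρ) = E_i(M₁ ρ M₁†) = ∑_j (E_{i,j} M₁) ρ (E_{i,j} M₁)†`. -/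
def Tstep (E : Fin m → Fin r → Matrix (Fin d) (Fin d) ℂ)
    (M1 : Matrix (Fin d) (Fin d) ℂ) (i : Fin m)
    (ρ : Matrix (Fin d) (Fin d) ℂ) : Matrix (Fin d) (Fin d) ℂ :=
  ∑ j, (E i j * M1) * ρ * (E i j * M1)ᴴ

/-- `T_f` for a word `f = s₁⋯s_n`: apply `T_{s₁}` first, then `T_{s₂}`, …, `T_{s_n}`. -/
def Tword (E : Fin m → Fin r → Matrix (Fin d) (Fin d) ℂ)
    (M1 : Matrix (Fin d) (Fin d) ℂ) (f : List (Fin m))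
    (ρ : Matrix (Fin d) (Fin d) ℂ) : Matrix (Fin d) (Fin d) ℂ :=
  f.foldl (fun σ k => Tstep E M1 k σ) ρ

/-- The support of a matrix: its column space, as a subspace of `ℂ^d`. -/
def supp (A : Matrix (Fin d) (Fin d) ℂ) : Submodule ℂ (Fin d → ℂ) :=
  LinearMap.range (Matrix.toLin' A)

/-- Length-`n` prefix of a schedule. -/
def prefixn (s : ℕ → Fin m) (n : ℕ) : List (Fin m) :=
  List.ofFn (fun i : Fin n => s i)

/-- Termination probability within a word `f`. -/
def tWord (E : Fin m → Fin r → Matrix (Fin d) (Fin d) ℂ)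
    (M0 M1 : Matrix (Fin d) (Fin d) ℂ) (f : List (Fin m))
    (ρ : Matrix (Fin d) (Fin d) ℂ) : ℝ :=
  ∑ n ∈ Finset.range (f.length + 1),
    (M0 * Tword E M1 (f.take n) ρ * M0ᴴ).trace.re

/-- Termination probability along a schedule `s`. -/
def tSched (E : Fin m → Fin r → Matrix (Fin d) (Fin d) ℂ)
    (M0 M1 : Matrix (Fin d) (Fin d) ℂ) (s : ℕ → Fin m)
    (ρ : Matrix (Fin d) (Fin d) ℂ) : ℝ :=
  ∑' n : ℕ, (M0 * Tword E M1 (prefixn s n) ρ * M0ᴴ).trace.re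

/-- Termination probability `t(ρ)`: infimum over all schedules. -/
def tInf (E : Fin m → Fin r → Matrix (Fin d) (Fin d) ℂ)
    (M0 M1 : Matrix (Fin d) (Fin d) ℂ)
    (ρ : Matrix (Fin d) (Fin d) ℂ) : ℝ :=
  ⨅ s : ℕ → Fin m, tSched E M0 M1 s ρ

/-- The reachable space `H_{R(ρ)}`. -/
def HR (E : Fin m → Fin r → Matrix (Fin d) (Fin d) ℂ)
    (M1 : Matrix (Fin d) (Fin d) ℂ)
    (ρ : Matrix (Fin d) (Fin d) ℂ) : Submodule ℂ (Fin d → ℂ) :=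
  ⨆ f : List (Fin m), supp (Tword E M1 f ρ)

/-- The average super-operator `T = (1/m) ∑ T_i`. -/
def Tavg (E : Fin m → Fin r → Matrix (Fin d) (Fin d) ℂ)
    (M1 : Matrix (Fin d) (Fin d) ℂ)
    (ρ : Matrix (Fin d) (Fin d) ℂ) : Matrix (Fin d) (Fin d) ℂ :=
  ((m : ℂ)⁻¹) • ∑ i : Fin m, Tstep E M1 i ρ

/-- `H_{R̄_n(ρ)} = ⋁_{k=0}^n supp(T^k(ρ))`. -/
def HRbar (E : Fin m → Fin r → Matrix (Fin d) (Fin d) ℂ)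
    (M1 : Matrix (Fin d) (Fin d) ℂ)
    (ρ : Matrix (Fin d) (Fin d) ℂ) (n : ℕ) : Submodule ℂ (Fin d → ℂ) :=
  ⨆ k : Fin (n + 1), supp ((Tavg E M1)^[k] ρ)

/-- Reachable termination probability `h(ρ)`. -/
def hProb (E : Fin m → Fin r → Matrix (Fin d) (Fin d) ℂ)
    (M0 M1 : Matrix (Fin d) (Fin d) ℂ)
    (ρ : Matrix (Fin d) (Fin d) ℂ) : ℝ :=
  sInf { x : ℝ | ∃ σ : Matrix (Fin d) (Fin d) ℂ,
    σ.PosSemidef ∧ σ.trace = 1 ∧ supp σ ≤ HR E M1 ρ ∧ x = tInf E M0 M1 σ }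

/-- `PD_f`: pure states diverging within the word `f`. -/
def PDword (E : Fin m → Fin r → Matrix (Fin d) (Fin d) ℂ)
    (M0 M1 : Matrix (Fin d) (Fin d) ℂ) (f : List (Fin m)) : Set (Fin d → ℂ) :=
  { x : Fin d → ℂ | tWord E M0 M1 f (Matrix.vecMulVec x (star x)) = 0 }

/-- `PD_n`: union of `PD_f` over words of length `n`. -/
def PDn (E : Fin m → Fin r → Matrix (Fin d) (Fin d) ℂ)
    (M0 M1 : Matrix (Fin d) (Fin d) ℂ) (n : ℕ) : Set (Fin d → ℂ) :=
  { x : Fin d → ℂ | ∃ f : List (Fin m), f.length = n ∧ x ∈ PDword E M0 M1 f }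

/-- `PD`: the diverging pure states. -/
def PD (E : Fin m → Fin r → Matrix (Fin d) (Fin d) ℂ)
    (M0 M1 : Matrix (Fin d) (Fin d) ℂ) : Set (Fin d → ℂ) :=
  { x : Fin d → ℂ | ∃ s : ℕ → Fin m, tSched E M0 M1 s (Matrix.vecMulVec x (star x)) = 0 }

section Aux

variable {d m r : ℕ}

lemma sum_mulVec' {d : ℕ} {ι : Type*} (s : Finset ι) (F : ι → Matrix (Fin d) (Fin d) ℂ)
    (y : Fin d → ℂ) : (∑ g ∈ s, F g) *ᵥ y = ∑ g ∈ s, F g *ᵥ y := by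
  classical
  induction s using Finset.induction with
  | empty => simp
  | insert _ _ h ih => rw [Finset.sum_insert h, Finset.sum_insert h, Matrix.add_mulVec, ih]

lemma dotProduct_sum' {d : ℕ} {ι : Type*} (s : Finset ι) (v : Fin d → ℂ)
    (w : ι → Fin d → ℂ) : v ⬝ᵥ (∑ g ∈ s, w g) = ∑ g ∈ s, v ⬝ᵥ w g := by
  classical
  induction s using Finset.induction with
  | empty => simp
  | insert _ _ h ih => rw [Finset.sum_insert h, Finset.sum_insert h, dotProduct_add, ih]

lemma mem_supp_iff {A : Matrix (Fin d) (Fin d) ℂ} {x : Fin d → ℂ} :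
    x ∈ supp A ↔ ∃ y, A *ᵥ y = x := by
  simp [supp, LinearMap.mem_range, Matrix.toLin'_apply]

lemma posSemidef_sum {ι : Type*} (s : Finset ι) (F : ι → Matrix (Fin d) (Fin d) ℂ)
    (h : ∀ i ∈ s, (F i).PosSemidef) : (∑ i ∈ s, F i).PosSemidef := by
  classical
  exact Finset.sum_induction F _ (fun a b ha hb => ha.add hb) Matrix.PosSemidef.zero h

lemma Tstep_posSemidef (E : Fin m → Fin r → Matrix (Fin d) (Fin d) ℂ)
    (M1 : Matrix (Fin d) (Fin d) ℂ) (i : Fin m) {ρ : Matrix (Fin d) (Fin d) ℂ}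
    (hρ : ρ.PosSemidef) : (Tstep E M1 i ρ).PosSemidef := by
  refine posSemidef_sum _ _ fun j _ => ?_
  exact hρ.mul_mul_conjTranspose_same _

lemma Tword_posSemidef (E : Fin m → Fin r → Matrix (Fin d) (Fin d) ℂ)
    (M1 : Matrix (Fin d) (Fin d) ℂ) (f : List (Fin m)) {ρ : Matrix (Fin d) (Fin d) ℂ}
    (hρ : ρ.PosSemidef) : (Tword E M1 f ρ).PosSemidef := by
  induction f generalizing ρ with
  | nil => exact hρ
  | cons k f ih => exact ih (Tstep_posSemidef E M1 k hρ)

lemma Tword_append_singleton (E : Fin m → Fin r → Matrix (Fin d) (Fin d) ℂ)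
    (M1 : Matrix (Fin d) (Fin d) ℂ) (f : List (Fin m)) (i : Fin m)
    (ρ : Matrix (Fin d) (Fin d) ℂ) :
    Tword E M1 (f ++ [i]) ρ = Tstep E M1 i (Tword E M1 f ρ) := by
  simp [Tword, List.foldl_append]

lemma Tstep_sum {ι : Type*} (E : Fin m → Fin r → Matrix (Fin d) (Fin d) ℂ)
    (M1 : Matrix (Fin d) (Fin d) ℂ) (i : Fin m) (s : Finset ι)
    (F : ι → Matrix (Fin d) (Fin d) ℂ) :
    Tstep E M1 i (∑ g ∈ s, F g) = ∑ g ∈ s, Tstep E M1 i (F g) := by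
  unfold Tstep
  rw [Finset.sum_comm]
  congr 1; ext j
  simp [Finset.mul_sum, Finset.sum_mul]

lemma Tstep_smul (E : Fin m → Fin r → Matrix (Fin d) (Fin d) ℂ)
    (M1 : Matrix (Fin d) (Fin d) ℂ) (i : Fin m) (c : ℂ)
    (ρ : Matrix (Fin d) (Fin d) ℂ) :
    Tstep E M1 i (c • ρ) = c • Tstep E M1 i ρ := by
  unfold Tstep
  rw [Finset.smul_sum]
  congr 1; ext j
  simp [Matrix.mul_smul, Matrix.smul_mul]

/-- `T^n ρ` is the scaled sum over all words of length `n`. -/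
lemma Tavg_iterate (E : Fin m → Fin r → Matrix (Fin d) (Fin d) ℂ)
    (M1 : Matrix (Fin d) (Fin d) ℂ) (ρ : Matrix (Fin d) (Fin d) ℂ) (n : ℕ) :
    (Tavg E M1)^[n] ρ =
      (((m : ℂ))⁻¹) ^ n • ∑ g : Fin n → Fin m, Tword E M1 (List.ofFn g) ρ := by
  induction n with
  | zero =>
    rw [Function.iterate_zero, id_eq, pow_zero, one_smul]
    have h0 : ∀ g : Fin 0 → Fin m, Tword E M1 (List.ofFn g) ρ = ρ := fun g => by
      simp [Tword]
    simp only [h0, Finset.sum_const, Finset.card_univ]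
    simp [Tword]
  | succ n ih =>
    rw [Function.iterate_succ_apply', ih]
    unfold Tavg
    have h1 : ∀ i : Fin m,
        Tstep E M1 i ((((m : ℂ))⁻¹) ^ n • ∑ g : Fin n → Fin m, Tword E M1 (List.ofFn g) ρ)
        = (((m : ℂ))⁻¹) ^ n • ∑ g : Fin n → Fin m, Tword E M1 (List.ofFn g ++ [i]) ρ := by
      intro i
      rw [Tstep_smul, Tstep_sum]
      congr 1
      refine Finset.sum_congr rfl fun g _ => ?_
      rw [Tword_append_singleton]
    simp only [h1]
    rw [← Finset.smul_sum, smul_smul, ← pow_succ']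
    congr 1
    have hbij : Function.Bijective
        (fun p : (Fin n → Fin m) × Fin m => (Fin.snoc p.1 p.2 : Fin (n+1) → Fin m)) := by
      constructor
      · rintro ⟨g₁, i₁⟩ ⟨g₂, i₂⟩ h
        have h1 : g₁ = g₂ := by
          funext k
          have := congrFun h k.castSucc
          simpa [Fin.snoc_castSucc] using this
        have h2 : i₁ = i₂ := by
          have := congrFun h (Fin.last n)
          simpa [Fin.snoc_last] using this
        simp [h1, h2]
      · intro h
        exact ⟨⟨Fin.init h, h (Fin.last n)⟩, Fin.snoc_init_self h⟩
    rw [Finset.sum_comm, ← Fintype.sum_prod_type']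
    refine Fintype.sum_bijective _ hbij
      (fun p : (Fin n → Fin m) × Fin m => Tword E M1 (List.ofFn p.1 ++ [p.2]) ρ)
      (fun g : Fin (n+1) → Fin m => Tword E M1 (List.ofFn g) ρ)
      fun p => ?_
    show Tword E M1 (List.ofFn p.1 ++ [p.2]) ρ
        = Tword E M1 (List.ofFn (Fin.snoc p.1 p.2)) ρ
    congr 1
    rw [List.ofFn_succ']
    simp [List.concat_eq_append, Fin.snoc_castSucc, Fin.snoc_last]

lemma supp_smul {A : Matrix (Fin d) (Fin d) ℂ} {c : ℂ} (hc : c ≠ 0) :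
    supp (c • A) = supp A := by
  ext x
  simp only [mem_supp_iff]
  constructor
  · rintro ⟨y, rfl⟩
    exact ⟨c • y, by rw [Matrix.mulVec_smul, Matrix.smul_mulVec]⟩
  · rintro ⟨y, rfl⟩
    exact ⟨c⁻¹ • y, by
      rw [Matrix.mulVec_smul, Matrix.smul_mulVec, smul_smul,
        inv_mul_cancel₀ hc, one_smul]⟩

/-- For a Hermitian matrix, the range of the associated Euclidean linear map is the
orthogonal complement of its kernel. -/
lemma range_toEuclideanLin_eq {A : Matrix (Fin d) (Fin d) ℂ} (hA : A.IsHermitian) :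
    LinearMap.range (Matrix.toEuclideanLin A) =
      (LinearMap.ker (Matrix.toEuclideanLin A))ᗮ := by
  have hsymm := Matrix.isHermitian_iff_isSymmetric.mp hA
  have h1 : (LinearMap.range (Matrix.toEuclideanLin A))ᗮ
      = LinearMap.ker (Matrix.toEuclideanLin A) := by
    ext x
    simp only [Submodule.mem_orthogonal, LinearMap.mem_range, LinearMap.mem_ker]
    constructor
    · intro h
      have h2 : ∀ y, (inner ℂ y (Matrix.toEuclideanLin A x) : ℂ) = 0 := by
        intro y
        rw [← hsymm y x]
        exact h _ ⟨y, rfl⟩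
      exact inner_self_eq_zero.mp (h2 (Matrix.toEuclideanLin A x))
    · rintro h u ⟨y, rfl⟩
      rw [hsymm y x, h, inner_zero_right]
  rw [← h1, Submodule.orthogonal_orthogonal]

/-- Monotonicity of supports: if `ker S ⊆ ker A` (for Hermitian `A`, `S`), then
`supp A ≤ supp S`. -/
lemma supp_le_supp_of_ker {A S : Matrix (Fin d) (Fin d) ℂ}
    (hA : A.IsHermitian) (hS : S.IsHermitian)
    (h : ∀ x, S *ᵥ x = 0 → A *ᵥ x = 0) : supp A ≤ supp S := by
  have e := (WithLp.linearEquiv 2 ℂ (Fin d → ℂ)).symm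
  have hket : LinearMap.ker (Matrix.toEuclideanLin S) ≤
      LinearMap.ker (Matrix.toEuclideanLin A) := by
    intro z hz
    rw [LinearMap.mem_ker] at *
    have hz' : S *ᵥ (WithLp.equiv 2 (Fin d → ℂ) z) = 0 := by
      have : Matrix.toEuclideanLin S ((WithLp.equiv 2 (Fin d → ℂ)).symm
          ((WithLp.equiv 2 (Fin d → ℂ)) z)) = 0 := by simpa using hz
      rw [Matrix.toEuclideanLin_apply_piLp_toLp] at this
      simpa using congrArg (WithLp.equiv 2 (Fin d → ℂ)) this
    have hA' := h _ hz'
    have : Matrix.toEuclideanLin A ((WithLp.equiv 2 (Fin d → ℂ)).symm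
        ((WithLp.equiv 2 (Fin d → ℂ)) z)) =
        (WithLp.equiv 2 (Fin d → ℂ)).symm (A *ᵥ (WithLp.equiv 2 (Fin d → ℂ)) z) :=
      Matrix.toEuclideanLin_apply_piLp_toLp _ _
    simp only [Equiv.symm_apply_apply] at this
    rw [this, hA']
    simp
  have hrange : LinearMap.range (Matrix.toEuclideanLin A) ≤
      LinearMap.range (Matrix.toEuclideanLin S) := by
    rw [range_toEuclideanLin_eq hA, range_toEuclideanLin_eq hS]
    exact Submodule.orthogonal_le hket
  intro x hx
  rw [mem_supp_iff] at hx
  obtain ⟨y, rfl⟩ := hx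
  have hx' : (WithLp.equiv 2 (Fin d → ℂ)).symm (A *ᵥ y) ∈
      LinearMap.range (Matrix.toEuclideanLin A) :=
    ⟨(WithLp.equiv 2 (Fin d → ℂ)).symm y, Matrix.toEuclideanLin_apply_piLp_toLp _ _⟩
  obtain ⟨z, hz⟩ := hrange hx'
  rw [mem_supp_iff]
  refine ⟨(WithLp.equiv 2 (Fin d → ℂ)) z, ?_⟩
  have : Matrix.toEuclideanLin S ((WithLp.equiv 2 (Fin d → ℂ)).symm
      ((WithLp.equiv 2 (Fin d → ℂ)) z)) =
      (WithLp.equiv 2 (Fin d → ℂ)).symm (S *ᵥ (WithLp.equiv 2 (Fin d → ℂ)) z) :=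
    Matrix.toEuclideanLin_apply_piLp_toLp _ _
  simp only [Equiv.symm_apply_apply] at this
  rw [this] at hz
  exact congrArg (WithLp.equiv 2 (Fin d → ℂ)) hz

/-- The support of a sum of PSD matrices is the join of the supports. -/
lemma supp_sum {ι : Type*} [Fintype ι] (F : ι → Matrix (Fin d) (Fin d) ℂ)
    (hF : ∀ g, (F g).PosSemidef) :
    supp (∑ g, F g) = ⨆ g, supp (F g) := by
  have hS : (∑ g, F g).PosSemidef := posSemidef_sum _ _ fun g _ => hF g
  apply le_antisymm
  · intro x hx
    rw [mem_supp_iff] at hx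
    obtain ⟨y, rfl⟩ := hx
    rw [sum_mulVec']
    exact Submodule.sum_mem _ fun g _ =>
      Submodule.mem_iSup_of_mem g (mem_supp_iff.mpr ⟨y, rfl⟩)
  · refine iSup_le fun g => ?_
    refine supp_le_supp_of_ker (hF g).isHermitian hS.isHermitian fun x hx => ?_
    have h0 : star x ⬝ᵥ (∑ g, F g) *ᵥ x = 0 := by rw [hx, dotProduct_zero]
    rw [sum_mulVec', dotProduct_sum'] at h0
    have heach : star x ⬝ᵥ (F g) *ᵥ x = 0 := by
      have := (Finset.sum_eq_zero_iff_of_nonneg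
        (fun i _ => (hF i).dotProduct_mulVec_nonneg x)).mp h0 g (Finset.mem_univ g)
      exact this
    exact ((hF g).dotProduct_mulVec_zero_iff x).mp heach

end Aux

/-- the reachable space of the nondeterministic program equals that of its
average deterministic program. -/
theorem reachable_space_eq_average (d m r : ℕ) (hd : 0 < d) (hm : 0 < m)
    (E : Fin m → Fin r → Matrix (Fin d) (Fin d) ℂ)
    (hE : ∀ i, ∑ j, (E i j)ᴴ * E i j = 1)
    (M0 M1 : Matrix (Fin d) (Fin d) ℂ)
    (hM : M0ᴴ * M0 + M1ᴴ * M1 = 1)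
    (ρ : Matrix (Fin d) (Fin d) ℂ) (hρ : ρ.PosSemidef) (htr : ρ.trace ≤ 1) :
    HR E M1 ρ = ⨆ n : ℕ, supp ((Tavg E M1)^[n] ρ) := by
  have hmc : ((m : ℂ))⁻¹ ≠ 0 := by
    simp [Nat.cast_eq_zero, Nat.pos_iff_ne_zero.mp hm]
  have hsupp : ∀ n : ℕ, supp ((Tavg E M1)^[n] ρ)
      = ⨆ g : Fin n → Fin m, supp (Tword E M1 (List.ofFn g) ρ) := by
    intro n
    rw [Tavg_iterate, supp_smul (pow_ne_zero n hmc),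
      supp_sum _ (fun g => Tword_posSemidef E M1 _ hρ)]
  unfold HR
  apply le_antisymm
  · refine iSup_le fun f => ?_
    have : supp (Tword E M1 f ρ) ≤ supp ((Tavg E M1)^[f.length] ρ) := by
      rw [hsupp f.length]
      have hf : List.ofFn f.get = f := List.ofFn_get f
      exact le_iSup_of_le f.get (by rw [hf])
    exact this.trans (le_iSup (fun n => supp ((Tavg E M1)^[n] ρ)) f.length)
  · refine iSup_le fun n => ?_
    rw [hsupp n]
    exact iSup_le fun g => le_iSup (fun f => supp (Tword E M1 f ρ)) (List.ofFn g)
end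
end

section
/- For every positive semidefinite d×d matrix ρ with tr(ρ) ≤ 1 and every n ≥ 0: if H_R̄_n(ρ) = H_R̄_{n+1}(ρ), then the reachable space H_R(ρ) = ⋁{supp(T_f(ρ)) : f a word over {1,…,m}} equals H_R̄_n(ρ). -/
noncomputable section
open Matrix
open scoped ComplexOrder

variable {d m r : ℕ}

namespace Aux

section SqrtCompat
open scoped MatrixOrder

/-- square root of a positive semidefinite matrix -/
def _root_.Matrix.PosSemidef.sqrt {A : Matrix (Fin d) (Fin d) ℂ} (_hA : A.PosSemidef) :
    Matrix (Fin d) (Fin d) ℂ :=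
  CFC.sqrt A

lemma _root_.Matrix.PosSemidef.posSemidef_sqrt {A : Matrix (Fin d) (Fin d) ℂ}
    (hA : A.PosSemidef) : hA.sqrt.PosSemidef :=
  (CFC.sqrt_nonneg A).posSemidef

lemma _root_.Matrix.PosSemidef.sqrt_mul_self {A : Matrix (Fin d) (Fin d) ℂ}
    (hA : A.PosSemidef) : hA.sqrt * hA.sqrt = A :=
  CFC.sqrt_mul_sqrt_self A hA.nonneg

end SqrtCompat

lemma range_mul_conjTranspose {n' : Type*} [Fintype n'] [DecidableEq n'] (M : Matrix (Fin d) n' ℂ) :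
    LinearMap.range (M * Mᴴ).mulVecLin = LinearMap.range M.mulVecLin := by
  apply Submodule.eq_of_le_of_finrank_le
  · rintro x ⟨y, rfl⟩
    exact ⟨Mᴴ *ᵥ y, by simp [Matrix.mulVecLin_apply, Matrix.mulVec_mulVec]⟩
  · exact le_of_eq (Matrix.rank_self_mul_conjTranspose M).symm

lemma supp_eq_range_sqrt {A : Matrix (Fin d) (Fin d) ℂ} (hA : A.PosSemidef) :
    supp A = LinearMap.range hA.sqrt.mulVecLin := by
  have h1 : A = hA.sqrt * hA.sqrtᴴ := by
    rw [hA.posSemidef_sqrt.isHermitian.eq, hA.sqrt_mul_self]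
  have h2 := range_mul_conjTranspose (d := d) hA.sqrt
  rw [← h1] at h2
  rw [supp, Matrix.toLin'_apply']
  exact h2

lemma supp_conj {A : Matrix (Fin d) (Fin d) ℂ} (hA : A.PosSemidef)
    (K : Matrix (Fin d) (Fin d) ℂ) :
    supp (K * A * Kᴴ) = Submodule.map (Matrix.toLin' K) (supp A) := by
  have h1 : K * A * Kᴴ = (K * hA.sqrt) * (K * hA.sqrt)ᴴ := by
    rw [Matrix.conjTranspose_mul, hA.posSemidef_sqrt.isHermitian.eq]
    simp only [Matrix.mul_assoc]
    rw [← Matrix.mul_assoc hA.sqrt, hA.sqrt_mul_self]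
  rw [supp, Matrix.toLin'_apply', h1, range_mul_conjTranspose,
    Matrix.mulVecLin_mul, LinearMap.range_comp, supp_eq_range_sqrt hA,
    Matrix.toLin'_apply']

lemma supp_add {A B : Matrix (Fin d) (Fin d) ℂ} (hA : A.PosSemidef) (hB : B.PosSemidef) :
    supp (A + B) = supp A ⊔ supp B := by
  set C := hA.sqrt with hC
  set D := hB.sqrt with hD
  have h1 : A + B = Matrix.fromCols C D * (Matrix.fromCols C D)ᴴ := by
    rw [Matrix.conjTranspose_fromCols_eq_fromRows_conjTranspose,
      Matrix.fromCols_mul_fromRows, hA.posSemidef_sqrt.isHermitian.eq,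
      hB.posSemidef_sqrt.isHermitian.eq, hA.sqrt_mul_self, hB.sqrt_mul_self]
  rw [supp, Matrix.toLin'_apply', h1, range_mul_conjTranspose,
    supp_eq_range_sqrt hA, supp_eq_range_sqrt hB, ← hC, ← hD]
  apply le_antisymm
  · rintro x ⟨y, rfl⟩
    have : y = Sum.elim (y ∘ Sum.inl) (y ∘ Sum.inr) := by
      ext z; cases z <;> rfl
    rw [Matrix.mulVecLin_apply, this, Matrix.fromCols_mulVec_sumElim]
    exact Submodule.add_mem_sup ⟨_, rfl⟩ ⟨_, rfl⟩
  · apply sup_le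
    · rintro x ⟨y, rfl⟩
      exact ⟨Sum.elim y 0, by simp [Matrix.mulVecLin_apply,
        Matrix.fromCols_mulVec_sumElim]⟩
    · rintro x ⟨y, rfl⟩
      exact ⟨Sum.elim 0 y, by simp [Matrix.mulVecLin_apply,
        Matrix.fromCols_mulVec_sumElim]⟩

lemma supp_zero : supp (0 : Matrix (Fin d) (Fin d) ℂ) = ⊥ := by
  rw [supp, Matrix.toLin'_apply', Matrix.mulVecLin_zero, LinearMap.range_zero]

lemma psd_sum {ι : Type*} (s : Finset ι) (A : ι → Matrix (Fin d) (Fin d) ℂ)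
    (h : ∀ i ∈ s, (A i).PosSemidef) : (∑ i ∈ s, A i).PosSemidef := by
  classical
  induction s using Finset.induction with
  | empty => simpa using Matrix.PosSemidef.zero
  | insert _ _ hx ih =>
    rw [Finset.sum_insert hx]
    exact ((h _ (Finset.mem_insert_self _ _)).add
      (ih fun i hi => h i (Finset.mem_insert_of_mem hi)))

lemma supp_sum {ι : Type*} [Fintype ι] (A : ι → Matrix (Fin d) (Fin d) ℂ)
    (h : ∀ i, (A i).PosSemidef) : supp (∑ i, A i) = ⨆ i, supp (A i) := by
  classical
  have key : ∀ s : Finset ι, supp (∑ i ∈ s, A i) = ⨆ i ∈ s, supp (A i) := by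
    intro s
    induction s using Finset.induction with
    | empty => simpa using supp_zero
    | insert _ _ hx ih =>
      rw [Finset.sum_insert hx, supp_add (h _) (psd_sum _ _ fun i _ => h i), ih,
        Finset.iSup_insert]
  rw [key Finset.univ]
  simp

lemma supp_smul {A : Matrix (Fin d) (Fin d) ℂ} {c : ℂ} (hc : c ≠ 0) :
    supp (c • A) = supp A := by
  have : Matrix.toLin' (c • A) = c • Matrix.toLin' A := by
    apply LinearMap.ext; intro x
    simp [Matrix.toLin'_apply, Matrix.smul_mulVec]
  rw [supp, this, LinearMap.range_smul _ _ hc, supp]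

lemma psd_smul {A : Matrix (Fin d) (Fin d) ℂ} (hA : A.PosSemidef) {c : ℂ}
    (hc : 0 ≤ c) : (c • A).PosSemidef := by
  have him : c.im = 0 := by
    have := (Complex.le_def.mp hc).2; simpa using this.symm
  refine Matrix.PosSemidef.of_dotProduct_mulVec_nonneg ?_ ?_
  · rw [Matrix.IsHermitian, Matrix.conjTranspose_smul, hA.1]
    congr 1
    simp [Complex.ext_iff, him]
  · intro x
    rw [Matrix.smul_mulVec, dotProduct_smul, smul_eq_mul]
    exact mul_nonneg hc (hA.dotProduct_mulVec_nonneg x)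

/-- support-level action of the average super-operator -/
def Phi (E : Fin m → Fin r → Matrix (Fin d) (Fin d) ℂ)
    (M1 : Matrix (Fin d) (Fin d) ℂ) (V : Submodule ℂ (Fin d → ℂ)) :
    Submodule ℂ (Fin d → ℂ) :=
  ⨆ i : Fin m, ⨆ j : Fin r, Submodule.map (Matrix.toLin' (E i j * M1)) V

variable (E : Fin m → Fin r → Matrix (Fin d) (Fin d) ℂ) (M1 : Matrix (Fin d) (Fin d) ℂ)

lemma Tstep_psd (i : Fin m) {σ : Matrix (Fin d) (Fin d) ℂ} (hσ : σ.PosSemidef) :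
    (Tstep E M1 i σ).PosSemidef :=
  psd_sum _ _ fun _ _ => hσ.mul_mul_conjTranspose_same _

lemma Tavg_psd (hm : 0 < m) {σ : Matrix (Fin d) (Fin d) ℂ} (hσ : σ.PosSemidef) :
    (Tavg E M1 σ).PosSemidef := by
  apply psd_smul (psd_sum _ _ fun i _ => Tstep_psd E M1 i hσ)
  have : ((m : ℂ))⁻¹ = (((m : ℝ)⁻¹ : ℝ) : ℂ) := by push_cast; ring
  rw [this]
  exact_mod_cast Complex.zero_le_real.mpr (by positivity)

lemma supp_Tstep (i : Fin m) {σ : Matrix (Fin d) (Fin d) ℂ} (hσ : σ.PosSemidef) :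
    supp (Tstep E M1 i σ) =
      ⨆ j : Fin r, Submodule.map (Matrix.toLin' (E i j * M1)) (supp σ) := by
  rw [Tstep, supp_sum _ fun j => hσ.mul_mul_conjTranspose_same _]
  exact iSup_congr fun j => supp_conj hσ _

lemma supp_Tavg (hm : 0 < m) {σ : Matrix (Fin d) (Fin d) ℂ} (hσ : σ.PosSemidef) :
    supp (Tavg E M1 σ) = Phi E M1 (supp σ) := by
  rw [Tavg, supp_smul (inv_ne_zero (Nat.cast_ne_zero.mpr hm.ne')),
    supp_sum _ fun i => Tstep_psd E M1 i hσ]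
  exact iSup_congr fun i => supp_Tstep E M1 i hσ

lemma Tword_psd : ∀ (f : List (Fin m)) {σ : Matrix (Fin d) (Fin d) ℂ},
    σ.PosSemidef → (Tword E M1 f σ).PosSemidef := by
  intro f
  induction f with
  | nil => intro σ h; exact h
  | cons i f ih => intro σ h; exact ih (Tstep_psd E M1 i h)

lemma Tword_snoc (f : List (Fin m)) (i : Fin m) (σ : Matrix (Fin d) (Fin d) ℂ) :
    Tword E M1 (f ++ [i]) σ = Tstep E M1 i (Tword E M1 f σ) := by
  simp [Tword, List.foldl_append]

lemma Phi_mono : Monotone (Phi E M1) := fun _ _ hab =>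
  iSup_mono fun _ => iSup_mono fun _ => Submodule.map_mono hab

end Aux

/-- if `H_R̄_n(ρ) = H_R̄_{n+1}(ρ)` then the reachable space `H_R(ρ)`
equals `H_R̄_n(ρ)`. -/
theorem reachable_space_eq_of_stable (d m r : ℕ) (hd : 0 < d) (hm : 0 < m)
    (E : Fin m → Fin r → Matrix (Fin d) (Fin d) ℂ)
    (hE : ∀ i, ∑ j, (E i j)ᴴ * E i j = 1)
    (M0 M1 : Matrix (Fin d) (Fin d) ℂ)
    (hM : M0ᴴ * M0 + M1ᴴ * M1 = 1)
    (ρ : Matrix (Fin d) (Fin d) ℂ) (hρ : ρ.PosSemidef) (htr : ρ.trace ≤ 1)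
    (n : ℕ) (hstab : HRbar E M1 ρ n = HRbar E M1 ρ (n + 1)) :
    HR E M1 ρ = HRbar E M1 ρ n := by
  set V : ℕ → Submodule ℂ (Fin d → ℂ) := fun k => supp ((Tavg E M1)^[k] ρ) with hVdef
  have hpsd : ∀ k, ((Tavg E M1)^[k] ρ).PosSemidef := by
    intro k
    induction k with
    | zero => exact hρ
    | succ k ih => rw [Function.iterate_succ_apply']; exact Aux.Tavg_psd E M1 hm ih
  have hV : ∀ k, V (k + 1) = Aux.Phi E M1 (V k) := by
    intro k
    show supp ((Tavg E M1)^[k+1] ρ) = _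
    rw [Function.iterate_succ_apply']
    exact Aux.supp_Tavg E M1 hm (hpsd k)
  have hTw : ∀ f : List (Fin m), (Tword E M1 f ρ).PosSemidef :=
    fun f => Aux.Tword_psd E M1 f hρ
  have claim1 : ∀ f : List (Fin m), supp (Tword E M1 f ρ) ≤ V f.length := by
    intro f
    induction f using List.reverseRecOn with
    | nil => exact le_of_eq rfl
    | append_singleton g i ih =>
      rw [Aux.Tword_snoc, Aux.supp_Tstep E M1 i (hTw g)]
      have h1 : (⨆ j : Fin r, Submodule.map (Matrix.toLin' (E i j * M1))
          (supp (Tword E M1 g ρ))) ≤ Aux.Phi E M1 (V g.length) := by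
        refine iSup_le fun j => ?_
        refine le_trans (Submodule.map_mono ih) (le_trans (le_iSup (fun j =>
          Submodule.map (Matrix.toLin' (E i j * M1)) (V g.length)) j) ?_)
        exact le_iSup (fun i' : Fin m => ⨆ j : Fin r,
          Submodule.map (Matrix.toLin' (E i' j * M1)) (V g.length)) i
      refine le_trans h1 ?_
      rw [← hV g.length]
      simp
  have claim2 : Aux.Phi E M1 (HRbar E M1 ρ n) ≤ HRbar E M1 ρ n := by
    conv_rhs => rw [hstab]
    refine iSup_le fun i => iSup_le fun j => ?_
    rw [HRbar, Submodule.map_iSup]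
    refine iSup_le fun k => ?_
    have h1 : Submodule.map (Matrix.toLin' (E i j * M1)) (V k) ≤ Aux.Phi E M1 (V k) :=
      le_trans (le_iSup (fun j => Submodule.map (Matrix.toLin' (E i j * M1)) (V ↑k)) j)
        (le_iSup (fun i' : Fin m => ⨆ j : Fin r,
          Submodule.map (Matrix.toLin' (E i' j * M1)) (V ↑k)) i)
    refine le_trans h1 ?_
    rw [← hV k]
    exact le_iSup (fun k : Fin (n + 2) => V ↑k) ⟨(k : ℕ) + 1, by omega⟩
  have hVle : ∀ k, V k ≤ HRbar E M1 ρ n := by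
    intro k
    induction k with
    | zero => exact le_iSup (fun k : Fin (n + 1) => V ↑k) ⟨0, by omega⟩
    | succ k ih => rw [hV k]; exact le_trans (Aux.Phi_mono E M1 ih) claim2
  have hPhiHR : Aux.Phi E M1 (HR E M1 ρ) ≤ HR E M1 ρ := by
    refine iSup_le fun i => iSup_le fun j => ?_
    rw [HR, Submodule.map_iSup]
    refine iSup_le fun f => ?_
    have h1 : Submodule.map (Matrix.toLin' (E i j * M1)) (supp (Tword E M1 f ρ)) ≤
        supp (Tword E M1 (f ++ [i]) ρ) := by
      rw [Aux.Tword_snoc, Aux.supp_Tstep E M1 i (hTw f)]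
      exact le_iSup (fun j => Submodule.map (Matrix.toLin' (E i j * M1))
        (supp (Tword E M1 f ρ))) j
    exact le_trans h1 (le_iSup (fun f => supp (Tword E M1 f ρ)) (f ++ [i]))
  have hVHR : ∀ k, V k ≤ HR E M1 ρ := by
    intro k
    induction k with
    | zero => exact le_iSup (fun f : List (Fin m) => supp (Tword E M1 f ρ)) []
    | succ k ih => rw [hV k]; exact le_trans (Aux.Phi_mono E M1 ih) hPhiHR
  apply le_antisymm
  · exact iSup_le fun f => le_trans (claim1 f) (hVle _)
  · exact iSup_le fun k => hVHR k
end
end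

section
/- If ρ_1 and ρ_2 are positive semidefinite d×d matrices with tr(ρ_1 + ρ_2) ≤ 1, then t(ρ_1 + ρ_2) = tr(ρ_1 + ρ_2) if and only if t(ρ_1) = tr(ρ_1) and t(ρ_2) = tr(ρ_2). -/
noncomputable section
open Matrix
open scoped ComplexOrder

variable {d m r : ℕ}

section Aux

-- AUX

variable (E : Fin m → Fin r → Matrix (Fin d) (Fin d) ℂ) (M0 M1 : Matrix (Fin d) (Fin d) ℂ)

lemma Tstep_add (i : Fin m) (ρ σ : Matrix (Fin d) (Fin d) ℂ) :
    Tstep E M1 i (ρ + σ) = Tstep E M1 i ρ + Tstep E M1 i σ := by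
  simp [Tstep, mul_add, add_mul, Finset.sum_add_distrib]

lemma Tword_add (f : List (Fin m)) (ρ σ : Matrix (Fin d) (Fin d) ℂ) :
    Tword E M1 f (ρ + σ) = Tword E M1 f ρ + Tword E M1 f σ := by
  induction f generalizing ρ σ with
  | nil => rfl
  | cons k f ih => simp only [Tword, List.foldl_cons, Tstep_add]; exact ih _ _

lemma Tstep_psd (i : Fin m) {ρ : Matrix (Fin d) (Fin d) ℂ} (h : ρ.PosSemidef) :
    (Tstep E M1 i ρ).PosSemidef := by
  classical
  unfold Tstep
  refine Finset.sum_induction _ _ (fun a b ha hb => ha.add hb) ?_ ?_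
  · simpa using Matrix.PosSemidef.zero (n := Fin d) (R := ℂ)
  · intro j _
    exact h.mul_mul_conjTranspose_same _

lemma Tword_psd (f : List (Fin m)) {ρ : Matrix (Fin d) (Fin d) ℂ} (h : ρ.PosSemidef) :
    (Tword E M1 f ρ).PosSemidef := by
  induction f generalizing ρ with
  | nil => exact h
  | cons k f ih => exact ih (Tstep_psd E M1 k h)

lemma psd_trace_re_nonneg {A : Matrix (Fin d) (Fin d) ℂ} (h : A.PosSemidef) :
    0 ≤ A.trace.re := by
  have h1 : ∀ i, 0 ≤ A i i := by
    intro i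
    have := h.dotProduct_mulVec_nonneg (Pi.single i 1)
    simpa [dotProduct, Matrix.mulVec, Pi.single_apply] using this
  have h2 : A.trace.re = ∑ i, (A i i).re := by
    simp [Matrix.trace, Matrix.diag, Complex.re_sum]
  rw [h2]
  exact Finset.sum_nonneg fun i _ => (Complex.nonneg_iff.mp (h1 i)).1

lemma trace_Tstep (hE : ∀ i, ∑ j, (E i j)ᴴ * E i j = 1) (i : Fin m)
    (σ : Matrix (Fin d) (Fin d) ℂ) :
    (Tstep E M1 i σ).trace = (M1ᴴ * M1 * σ).trace := by
  unfold Tstep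
  rw [Matrix.trace_sum]
  have key : ∀ j, ((E i j * M1) * σ * (E i j * M1)ᴴ).trace
      = ((E i j)ᴴ * E i j * (M1 * σ * M1ᴴ)).trace := by
    intro j
    have hr : (E i j * M1) * σ * (E i j * M1)ᴴ
        = E i j * (M1 * σ * M1ᴴ) * (E i j)ᴴ := by
      rw [Matrix.conjTranspose_mul]; noncomm_ring
    rw [hr, Matrix.trace_mul_cycle (E i j) (M1 * σ * M1ᴴ) (E i j)ᴴ]
  simp_rw [key, ← Matrix.trace_sum, ← Finset.sum_mul, hE i, one_mul]
  rw [Matrix.trace_mul_cycle M1 σ M1ᴴ]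

lemma trace_term (hE : ∀ i, ∑ j, (E i j)ᴴ * E i j = 1)
    (hM : M0ᴴ * M0 + M1ᴴ * M1 = 1) (i : Fin m) (σ : Matrix (Fin d) (Fin d) ℂ) :
    (M0 * σ * M0ᴴ).trace = σ.trace - (Tstep E M1 i σ).trace := by
  rw [trace_Tstep E M1 hE i σ, Matrix.trace_mul_cycle M0 σ M0ᴴ,
    eq_sub_of_add_eq hM, sub_mul, one_mul, Matrix.trace_sub]

lemma prefixn_succ (s : ℕ → Fin m) (n : ℕ) :
    prefixn s (n + 1) = prefixn s n ++ [s n] := by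
  rw [prefixn, List.ofFn_succ', List.concat_eq_append]
  rfl

lemma Tword_snoc (f : List (Fin m)) (k : Fin m) (ρ : Matrix (Fin d) (Fin d) ℂ) :
    Tword E M1 (f ++ [k]) ρ = Tstep E M1 k (Tword E M1 f ρ) := by
  simp [Tword, List.foldl_append]

lemma term_eq_sub (hE : ∀ i, ∑ j, (E i j)ᴴ * E i j = 1)
    (hM : M0ᴴ * M0 + M1ᴴ * M1 = 1) (hm : 0 < m) (s : ℕ → Fin m)
    (ρ : Matrix (Fin d) (Fin d) ℂ) (n : ℕ) :
    (M0 * Tword E M1 (prefixn s n) ρ * M0ᴴ).trace.re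
      = (Tword E M1 (prefixn s n) ρ).trace.re
        - (Tword E M1 (prefixn s (n+1)) ρ).trace.re := by
  rw [prefixn_succ, Tword_snoc, trace_term E M0 M1 hE hM (s n), Complex.sub_re]

lemma term_nonneg {ρ : Matrix (Fin d) (Fin d) ℂ} (hρ : ρ.PosSemidef)
    (s : ℕ → Fin m) (n : ℕ) :
    0 ≤ (M0 * Tword E M1 (prefixn s n) ρ * M0ᴴ).trace.re :=
  psd_trace_re_nonneg (((Tword_psd E M1 _ hρ).mul_mul_conjTranspose_same M0))

lemma sum_range_le (hE : ∀ i, ∑ j, (E i j)ᴴ * E i j = 1)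
    (hM : M0ᴴ * M0 + M1ᴴ * M1 = 1) (hm : 0 < m) {ρ : Matrix (Fin d) (Fin d) ℂ}
    (hρ : ρ.PosSemidef) (s : ℕ → Fin m) (N : ℕ) :
    ∑ n ∈ Finset.range N, (M0 * Tword E M1 (prefixn s n) ρ * M0ᴴ).trace.re
      ≤ ρ.trace.re := by
  have h : ∀ n ∈ Finset.range N, (M0 * Tword E M1 (prefixn s n) ρ * M0ᴴ).trace.re
      = (fun n => (Tword E M1 (prefixn s n) ρ).trace.re) n
        - (fun n => (Tword E M1 (prefixn s n) ρ).trace.re) (n+1) :=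
    fun n _ => term_eq_sub E M0 M1 hE hM hm s ρ n
  rw [Finset.sum_congr rfl h, Finset.sum_range_sub']
  have h0 : (Tword E M1 (prefixn s 0) ρ) = ρ := rfl
  rw [h0]
  have := psd_trace_re_nonneg (Tword_psd E M1 (prefixn s N) hρ)
  linarith

lemma tSched_summable (hE : ∀ i, ∑ j, (E i j)ᴴ * E i j = 1)
    (hM : M0ᴴ * M0 + M1ᴴ * M1 = 1) (hm : 0 < m) {ρ : Matrix (Fin d) (Fin d) ℂ}
    (hρ : ρ.PosSemidef) (s : ℕ → Fin m) :
    Summable (fun n => (M0 * Tword E M1 (prefixn s n) ρ * M0ᴴ).trace.re) :=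
  summable_of_sum_range_le (term_nonneg E M0 M1 hρ s)
    (sum_range_le E M0 M1 hE hM hm hρ s)

lemma tSched_le (hE : ∀ i, ∑ j, (E i j)ᴴ * E i j = 1)
    (hM : M0ᴴ * M0 + M1ᴴ * M1 = 1) (hm : 0 < m) {ρ : Matrix (Fin d) (Fin d) ℂ}
    (hρ : ρ.PosSemidef) (s : ℕ → Fin m) :
    tSched E M0 M1 s ρ ≤ ρ.trace.re :=
  Summable.tsum_le_of_sum_range_le (tSched_summable E M0 M1 hE hM hm hρ s)
    (sum_range_le E M0 M1 hE hM hm hρ s)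

lemma tSched_nonneg {ρ : Matrix (Fin d) (Fin d) ℂ} (hρ : ρ.PosSemidef) (s : ℕ → Fin m) :
    0 ≤ tSched E M0 M1 s ρ :=
  tsum_nonneg (term_nonneg E M0 M1 hρ s)

lemma tSched_add (hE : ∀ i, ∑ j, (E i j)ᴴ * E i j = 1)
    (hM : M0ᴴ * M0 + M1ᴴ * M1 = 1) (hm : 0 < m) {ρ σ : Matrix (Fin d) (Fin d) ℂ}
    (hρ : ρ.PosSemidef) (hσ : σ.PosSemidef) (s : ℕ → Fin m) :
    tSched E M0 M1 s (ρ + σ) = tSched E M0 M1 s ρ + tSched E M0 M1 s σ := by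
  unfold tSched
  rw [← Summable.tsum_add (tSched_summable E M0 M1 hE hM hm hρ s)
    (tSched_summable E M0 M1 hE hM hm hσ s)]
  congr 1; funext n
  rw [Tword_add, mul_add, add_mul, Matrix.trace_add, Complex.add_re]

lemma tInf_bddBelow (ρ : Matrix (Fin d) (Fin d) ℂ) (hρ : ρ.PosSemidef) :
    BddBelow (Set.range (fun s : ℕ → Fin m => tSched E M0 M1 s ρ)) :=
  ⟨0, by rintro x ⟨s, rfl⟩; exact tSched_nonneg E M0 M1 hρ s⟩

lemma tInf_le_trace (hE : ∀ i, ∑ j, (E i j)ᴴ * E i j = 1)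
    (hM : M0ᴴ * M0 + M1ᴴ * M1 = 1) (hm : 0 < m) {ρ : Matrix (Fin d) (Fin d) ℂ}
    (hρ : ρ.PosSemidef) : tInf E M0 M1 ρ ≤ ρ.trace.re := by
  exact le_trans (ciInf_le (tInf_bddBelow E M0 M1 ρ hρ) (fun _ => ⟨0, hm⟩))
    (tSched_le E M0 M1 hE hM hm hρ _)

end Aux

/-- `ρ₁ + ρ₂` is terminating iff `ρ₁` and `ρ₂` both are. -/
theorem terminating_add_iff (d m r : ℕ) (hd : 0 < d) (hm : 0 < m)
    (E : Fin m → Fin r → Matrix (Fin d) (Fin d) ℂ)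
    (hE : ∀ i, ∑ j, (E i j)ᴴ * E i j = 1)
    (M0 M1 : Matrix (Fin d) (Fin d) ℂ)
    (hM : M0ᴴ * M0 + M1ᴴ * M1 = 1)
    (ρ₁ ρ₂ : Matrix (Fin d) (Fin d) ℂ)
    (hρ₁ : ρ₁.PosSemidef) (hρ₂ : ρ₂.PosSemidef)
    (htr : (ρ₁ + ρ₂).trace ≤ 1) :
    tInf E M0 M1 (ρ₁ + ρ₂) = (ρ₁ + ρ₂).trace.re ↔
      (tInf E M0 M1 ρ₁ = ρ₁.trace.re ∧ tInf E M0 M1 ρ₂ = ρ₂.trace.re) := by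
  haveI : Nonempty (ℕ → Fin m) := ⟨fun _ => ⟨0, hm⟩⟩
  have hsum : (ρ₁ + ρ₂).PosSemidef := hρ₁.add hρ₂
  have htre : (ρ₁ + ρ₂).trace.re = ρ₁.trace.re + ρ₂.trace.re := by
    rw [Matrix.trace_add, Complex.add_re]
  have hle1 := tInf_le_trace E M0 M1 hE hM hm hρ₁
  have hle2 := tInf_le_trace E M0 M1 hE hM hm hρ₂
  have hles := tInf_le_trace E M0 M1 hE hM hm hsum
  constructor
  · intro h
    constructor
    · refine le_antisymm hle1 (le_ciInf fun s => ?_)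
      have h1 : tInf E M0 M1 (ρ₁ + ρ₂) ≤ tSched E M0 M1 s (ρ₁ + ρ₂) :=
        ciInf_le (tInf_bddBelow E M0 M1 _ hsum) s
      rw [h, tSched_add E M0 M1 hE hM hm hρ₁ hρ₂, htre] at h1
      have := tSched_le E M0 M1 hE hM hm hρ₂ s
      linarith
    · refine le_antisymm hle2 (le_ciInf fun s => ?_)
      have h1 : tInf E M0 M1 (ρ₁ + ρ₂) ≤ tSched E M0 M1 s (ρ₁ + ρ₂) :=
        ciInf_le (tInf_bddBelow E M0 M1 _ hsum) s
      rw [h, tSched_add E M0 M1 hE hM hm hρ₁ hρ₂, htre] at h1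
      have := tSched_le E M0 M1 hE hM hm hρ₁ s
      linarith
  · rintro ⟨h1, h2⟩
    refine le_antisymm hles (le_ciInf fun s => ?_)
    rw [tSched_add E M0 M1 hE hM hm hρ₁ hρ₂, htre]
    have a1 : tInf E M0 M1 ρ₁ ≤ tSched E M0 M1 s ρ₁ :=
      ciInf_le (tInf_bddBelow E M0 M1 _ hρ₁) s
    have a2 : tInf E M0 M1 ρ₂ ≤ tSched E M0 M1 s ρ₂ :=
      ciInf_le (tInf_bddBelow E M0 M1 _ hρ₂) s
    rw [h1] at a1; rw [h2] at a2
    linarith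
end
end

section
/- PD = ⋂_{n≥0} PD_n; that is, a vector x ∈ ℂ^d satisfies t_s(x x†) = 0 for some schedule s if and only if for every n ≥ 0 there exists a word f of length n with t_f(x x†) = 0. -/
noncomputable section
open Matrix
open scoped ComplexOrder

variable {d m r : ℕ}

namespace PDaux

open Matrix
open scoped ComplexOrder

variable {d m r : ℕ}

lemma psd_trace_nonneg {A : Matrix (Fin d) (Fin d) ℂ} (hA : A.PosSemidef) :
    0 ≤ A.trace := by
  rw [Matrix.trace]
  refine Finset.sum_nonneg fun i _ => ?_
  have h := hA.dotProduct_mulVec_nonneg (Pi.single i 1)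
  have hx : star (Pi.single i 1 : Fin d → ℂ) ⬝ᵥ A *ᵥ (Pi.single i 1) = A i i := by
    simp [dotProduct, Matrix.mulVec_single, Pi.single_apply]
  rw [hx] at h
  simpa [Matrix.diag] using h

lemma psd_trace_re_nonneg {A : Matrix (Fin d) (Fin d) ℂ} (hA : A.PosSemidef) :
    0 ≤ A.trace.re := by
  have := psd_trace_nonneg hA
  rw [Complex.le_def] at this
  simpa using this.1

lemma Tstep_posSemidef (E : Fin m → Fin r → Matrix (Fin d) (Fin d) ℂ)
    (M1 : Matrix (Fin d) (Fin d) ℂ) (i : Fin m)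
    {σ : Matrix (Fin d) (Fin d) ℂ} (hσ : σ.PosSemidef) :
    (Tstep E M1 i σ).PosSemidef := by
  unfold Tstep
  exact Finset.sum_induction _ _ (fun A B hA hB => hA.add hB) Matrix.PosSemidef.zero
    (fun j _ => hσ.mul_mul_conjTranspose_same _)

lemma Tword_cons (E : Fin m → Fin r → Matrix (Fin d) (Fin d) ℂ)
    (M1 : Matrix (Fin d) (Fin d) ℂ) (k : Fin m) (f : List (Fin m))
    (σ : Matrix (Fin d) (Fin d) ℂ) :
    Tword E M1 (k :: f) σ = Tword E M1 f (Tstep E M1 k σ) := rfl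

lemma Tword_append (E : Fin m → Fin r → Matrix (Fin d) (Fin d) ℂ)
    (M1 : Matrix (Fin d) (Fin d) ℂ) (f g : List (Fin m))
    (σ : Matrix (Fin d) (Fin d) ℂ) :
    Tword E M1 (f ++ g) σ = Tword E M1 g (Tword E M1 f σ) :=
  List.foldl_append

lemma Tword_posSemidef (E : Fin m → Fin r → Matrix (Fin d) (Fin d) ℂ)
    (M1 : Matrix (Fin d) (Fin d) ℂ) (f : List (Fin m))
    {σ : Matrix (Fin d) (Fin d) ℂ} (hσ : σ.PosSemidef) :
    (Tword E M1 f σ).PosSemidef := by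
  induction f generalizing σ with
  | nil => exact hσ
  | cons k f ih => rw [Tword_cons]; exact ih (Tstep_posSemidef E M1 k hσ)

lemma term_nonneg (E : Fin m → Fin r → Matrix (Fin d) (Fin d) ℂ)
    (M0 M1 : Matrix (Fin d) (Fin d) ℂ) (f : List (Fin m))
    {σ : Matrix (Fin d) (Fin d) ℂ} (hσ : σ.PosSemidef) :
    0 ≤ (M0 * Tword E M1 f σ * M0ᴴ).trace.re :=
  psd_trace_re_nonneg ((Tword_posSemidef E M1 f hσ).mul_mul_conjTranspose_same M0)

lemma tWord_nonneg (E : Fin m → Fin r → Matrix (Fin d) (Fin d) ℂ)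
    (M0 M1 : Matrix (Fin d) (Fin d) ℂ) (f : List (Fin m))
    {σ : Matrix (Fin d) (Fin d) ℂ} (hσ : σ.PosSemidef) :
    0 ≤ tWord E M0 M1 f σ :=
  Finset.sum_nonneg fun n _ => term_nonneg E M0 M1 _ hσ

lemma tWord_terms_zero (E : Fin m → Fin r → Matrix (Fin d) (Fin d) ℂ)
    (M0 M1 : Matrix (Fin d) (Fin d) ℂ) (f : List (Fin m))
    {σ : Matrix (Fin d) (Fin d) ℂ} (hσ : σ.PosSemidef)
    (h : tWord E M0 M1 f σ = 0) :
    ∀ n ≤ f.length, (M0 * Tword E M1 (f.take n) σ * M0ᴴ).trace.re = 0 := by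
  intro n hn
  have := (Finset.sum_eq_zero_iff_of_nonneg
    (fun k _ => term_nonneg E M0 M1 (f.take k) hσ)).mp h
  exact this n (Finset.mem_range.mpr (Nat.lt_succ_of_le hn))

lemma tWord_prefix (E : Fin m → Fin r → Matrix (Fin d) (Fin d) ℂ)
    (M0 M1 : Matrix (Fin d) (Fin d) ℂ) (f g : List (Fin m))
    {σ : Matrix (Fin d) (Fin d) ℂ} (hσ : σ.PosSemidef)
    (h : tWord E M0 M1 (f ++ g) σ = 0) :
    tWord E M0 M1 f σ = 0 := by
  have hz := tWord_terms_zero E M0 M1 (f ++ g) hσ h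
  refine Finset.sum_eq_zero fun n hn => ?_
  have hn' : n ≤ f.length := Nat.lt_succ_iff.mp (Finset.mem_range.mp hn)
  rw [← List.take_append_of_le_length hn']
  exact hz n (by rw [List.length_append]; exact hn'.trans (Nat.le_add_right _ _))

lemma trace_Tstep (E : Fin m → Fin r → Matrix (Fin d) (Fin d) ℂ)
    (M0 M1 : Matrix (Fin d) (Fin d) ℂ)
    (hE : ∀ i, ∑ j, (E i j)ᴴ * E i j = 1)
    (hM : M0ᴴ * M0 + M1ᴴ * M1 = 1) (i : Fin m) (σ : Matrix (Fin d) (Fin d) ℂ) :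
    (Tstep E M1 i σ).trace = σ.trace - (M0 * σ * M0ᴴ).trace := by
  have key : (Tstep E M1 i σ).trace = (M1 * σ * M1ᴴ).trace := by
    unfold Tstep
    rw [Matrix.trace_sum]
    have hterm : ∀ j : Fin r, ((E i j * M1) * σ * (E i j * M1)ᴴ).trace
        = ((E i j)ᴴ * E i j * (M1 * σ * M1ᴴ)).trace := by
      intro j
      rw [Matrix.conjTranspose_mul]
      rw [show (E i j * M1) * σ * (M1ᴴ * (E i j)ᴴ)
          = E i j * (M1 * σ * M1ᴴ) * (E i j)ᴴ by simp only [Matrix.mul_assoc]]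
      rw [Matrix.trace_mul_cycle]
    rw [Finset.sum_congr rfl fun j _ => hterm j, ← Matrix.trace_sum,
      ← Finset.sum_mul, hE i, one_mul]
  have h2 : (M0 * σ * M0ᴴ).trace + (M1 * σ * M1ᴴ).trace = σ.trace := by
    rw [Matrix.trace_mul_cycle M0 σ M0ᴴ, Matrix.trace_mul_cycle M1 σ M1ᴴ,
      ← Matrix.trace_add, ← Matrix.add_mul, hM, one_mul]
  rw [key]; linear_combination h2

lemma prefixn_succ (s : ℕ → Fin m) (n : ℕ) :
    prefixn s (n + 1) = prefixn s n ++ [s n] := by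
  unfold prefixn
  rw [List.ofFn_succ']
  simp [List.concat_eq_append]

lemma prefixn_length (s : ℕ → Fin m) (n : ℕ) : (prefixn s n).length = n := by
  simp [prefixn]

lemma prefixn_take (s : ℕ → Fin m) {k n : ℕ} (h : k ≤ n) :
    (prefixn s n).take k = prefixn s k := by
  induction n with
  | zero => interval_cases k; simp [prefixn]
  | succ n ih =>
    rcases Nat.lt_succ_iff_lt_or_eq.mp (Nat.lt_succ_of_le h) with h' | h'
    · have hk : k ≤ n := Nat.lt_succ_iff.mp h'
      rw [prefixn_succ, List.take_append_of_le_length (by rw [prefixn_length]; exact hk)]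
      exact ih hk
    · subst h'
      exact List.take_of_length_le (le_of_eq (prefixn_length s _))

/-- König's lemma for prefix-closed properties over a finite alphabet. -/
lemma koenig {α : Type*} [Fintype α] [Nonempty α] (P : List α → Prop)
    (hpref : ∀ f g : List α, P (f ++ g) → P f)
    (h : ∀ n : ℕ, ∃ f : List α, f.length = n ∧ P f) :
    ∃ s : ℕ → α, ∀ n, P (List.ofFn fun i : Fin n => s (i : ℕ)) := by
  classical
  set Ext : List α → Prop := fun f => ∀ n, ∃ g : List α, g.length = n ∧ P (f ++ g) with hExt
  have h0 : Ext [] := by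
    intro n; obtain ⟨f, hf, hPf⟩ := h n; exact ⟨f, hf, by simpa using hPf⟩
  have step : ∀ f, Ext f → ∃ i : α, Ext (f ++ [i]) := by
    intro f hf
    by_contra hc
    push_neg at hc
    have hc' : ∀ i : α, ∃ n, ∀ g : List α, g.length = n → ¬ P (f ++ [i] ++ g) := by
      intro i
      have hi := hc i
      simp only [hExt] at hi
      push_neg at hi
      obtain ⟨n, hn⟩ := hi
      exact ⟨n, fun g hg => hn g hg⟩
    choose N hN using hc'
    set M := (Finset.univ : Finset α).sup N with hMdef
    obtain ⟨g, hg, hPg⟩ := hf (M + 1)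
    cases g with
    | nil => simp at hg
    | cons i g' =>
      have hg' : g'.length = M := by simpa using hg
      have hle : N i ≤ M := Finset.le_sup (Finset.mem_univ i)
      have hlen : (g'.take (N i)).length = N i := by
        rw [List.length_take, hg']; exact min_eq_left hle
      refine hN i (g'.take (N i)) hlen ?_
      have : P ((f ++ [i] ++ g'.take (N i)) ++ g'.drop (N i)) := by
        have heq : (f ++ [i] ++ g'.take (N i)) ++ g'.drop (N i) = f ++ (i :: g') := by
          rw [List.append_assoc (f ++ [i]), List.take_append_drop]
          simp
        rw [heq]; exact hPg
      exact hpref _ _ this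
  let next : List α → α := fun f =>
    if hf : Ext f then Classical.choose (step f hf) else Classical.arbitrary α
  have hnext : ∀ f, Ext f → Ext (f ++ [next f]) := by
    intro f hf
    have : next f = Classical.choose (step f hf) := dif_pos hf
    rw [this]
    exact Classical.choose_spec (step f hf)
  let F : ℕ → List α := fun n => Nat.rec [] (fun _ g => g ++ [next g]) n
  have hFs : ∀ n, F (n + 1) = F n ++ [next (F n)] := fun n => rfl
  have hFE : ∀ n, Ext (F n) := by
    intro n
    induction n with
    | zero => exact h0
    | succ n ih => rw [hFs]; exact hnext _ ih
  refine ⟨fun n => next (F n), ?_⟩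
  have hofn : ∀ n, (List.ofFn fun i : Fin n => next (F (i : ℕ))) = F n := by
    intro n
    induction n with
    | zero => rfl
    | succ n ih =>
      rw [List.ofFn_succ']
      simp only [List.concat_eq_append, Fin.coe_castSucc, Fin.val_last]
      rw [ih]
  intro n
  rw [hofn n]
  obtain ⟨g, hg0, hPg⟩ := hFE n 0
  rw [List.length_eq_zero_iff.mp hg0, List.append_nil] at hPg
  exact hPg

end PDaux

/-- `PD = ⋂_{n≥0} PD_n`. -/
theorem PD_eq_iInter_PDn (d m r : ℕ) (hd : 0 < d) (hm : 0 < m)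
    (E : Fin m → Fin r → Matrix (Fin d) (Fin d) ℂ)
    (hE : ∀ i, ∑ j, (E i j)ᴴ * E i j = 1)
    (M0 M1 : Matrix (Fin d) (Fin d) ℂ)
    (hM : M0ᴴ * M0 + M1ᴴ * M1 = 1)
    (x : Fin d → ℂ) :
    (∃ s : ℕ → Fin m, tSched E M0 M1 s (Matrix.vecMulVec x (star x)) = 0) ↔
      ∀ n : ℕ, ∃ f : List (Fin m), f.length = n ∧
        tWord E M0 M1 f (Matrix.vecMulVec x (star x)) = 0  := by
  classical
  set ρ := Matrix.vecMulVec x (star x) with hρdef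
  have hρ : ρ.PosSemidef := by
    rw [hρdef, Matrix.vecMulVec_eq Unit, ← Matrix.conjTranspose_replicateCol]
    exact Matrix.posSemidef_self_mul_conjTranspose _
  constructor
  · rintro ⟨s, hs⟩ n
    set a : ℕ → ℝ := fun k => (M0 * Tword E M1 (prefixn s k) ρ * M0ᴴ).trace.re with ha
    have hanonneg : ∀ k, 0 ≤ a k := fun k => PDaux.term_nonneg E M0 M1 _ hρ
    set b : ℕ → ℝ := fun k => (Tword E M1 (prefixn s k) ρ).trace.re with hb
    have hbnonneg : ∀ k, 0 ≤ b k :=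
      fun k => PDaux.psd_trace_re_nonneg (PDaux.Tword_posSemidef E M1 _ hρ)
    have hab : ∀ k, a k = b k - b (k + 1) := by
      intro k
      have hstep : Tword E M1 (prefixn s (k + 1)) ρ
          = Tstep E M1 (s k) (Tword E M1 (prefixn s k) ρ) := by
        rw [PDaux.prefixn_succ, PDaux.Tword_append]
        rfl
      have htr := PDaux.trace_Tstep E M0 M1 hE hM (s k) (Tword E M1 (prefixn s k) ρ)
      rw [← hstep] at htr
      have : (M0 * Tword E M1 (prefixn s k) ρ * M0ᴴ).trace
          = (Tword E M1 (prefixn s k) ρ).trace - (Tword E M1 (prefixn s (k + 1)) ρ).trace := by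
        linear_combination htr
      simp only [ha, hb, this, Complex.sub_re]
    have hpartial : ∀ N, ∑ k ∈ Finset.range N, a k ≤ b 0 := by
      intro N
      have : ∑ k ∈ Finset.range N, a k = b 0 - b N := by
        rw [Finset.sum_congr rfl fun k _ => hab k]
        exact Finset.sum_range_sub' b N
      rw [this]
      have := hbnonneg N
      linarith
    have hsummable : Summable a := summable_of_sum_range_le hanonneg hpartial
    have htsum : ∑' k, a k = 0 := hs
    have hzero : ∑ k ∈ Finset.range (n + 1), a k = 0 := by
      have hle : ∑ k ∈ Finset.range (n + 1), a k ≤ 0 := by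
        rw [← htsum]
        exact hsummable.sum_le_tsum _ (fun k _ => hanonneg k)
      have hge : 0 ≤ ∑ k ∈ Finset.range (n + 1), a k :=
        Finset.sum_nonneg fun k _ => hanonneg k
      linarith
    refine ⟨prefixn s n, PDaux.prefixn_length s n, ?_⟩
    unfold tWord
    rw [PDaux.prefixn_length s n]
    rw [← hzero]
    refine Finset.sum_congr rfl fun k hk => ?_
    rw [PDaux.prefixn_take s (Nat.lt_succ_iff.mp (Finset.mem_range.mp hk))]
  · intro h
    have : Nonempty (Fin m) := ⟨⟨0, hm⟩⟩
    obtain ⟨s, hsP⟩ := PDaux.koenig (fun f => tWord E M0 M1 f ρ = 0)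
      (fun f g hfg => PDaux.tWord_prefix E M0 M1 f g hρ hfg) h
    refine ⟨s, ?_⟩
    have hterm : ∀ n, (M0 * Tword E M1 (prefixn s n) ρ * M0ᴴ).trace.re = 0 := by
      intro n
      have := PDaux.tWord_terms_zero E M0 M1 (prefixn s n) hρ (hsP n) n
        (le_of_eq (PDaux.prefixn_length s n).symm)
      rwa [List.take_of_length_le (le_of_eq (PDaux.prefixn_length s n))] at this
    unfold tSched
    calc (∑' n : ℕ, (M0 * Tword E M1 (prefixn s n) ρ * M0ᴴ).trace.re)
        = ∑' _ : ℕ, (0 : ℝ) := tsum_congr hterm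
      _ = 0 := tsum_zero
end
end
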